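/- Let G be a simple graph on vertex set {1,…,p} containing an edge (i,j), and let G' be the graph obtained from G by removing the single edge (i,j). Then the Ising distributions satisfy the exact identity P_G[X_i = X_j] / (1 − P_G[X_i = X_j]) = e^{2λ} · P_{G'}[X_i = X_j] / (1 − P_{G'}[X_i = X_j]). -/

import Mathlib

open Real Finset
open scoped Classical

noncomputable section

/-- Value of a spin: `true ↦ +1`, `false ↦ -1`. -/
def confVal (b : Bool) : ℝ := if b then 1 else -1

/-- The Ising interaction `∑_{{i,j}∈E} x_i x_j` (each edge counted once). -/
def isingEnergy {p : ℕ} (G : SimpleGraph (Fin p)) (x : Fin p → Bool) : ℝ :=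
  (1 / 2) * ∑ i : Fin p, ∑ j : Fin p,
    if G.Adj i j then confVal (x i) * confVal (x j) else 0

/-- The partition function `Z_G`. -/
def isingZ {p : ℕ} (lam : ℝ) (G : SimpleGraph (Fin p)) : ℝ :=
  ∑ x : Fin p → Bool, Real.exp (lam * isingEnergy G x)

/-- The ferromagnetic Ising distribution `P_G(x)`. -/
def isingP {p : ℕ} (lam : ℝ) (G : SimpleGraph (Fin p)) (x : Fin p → Bool) : ℝ :=
  Real.exp (lam * isingEnergy G x) / isingZ lam G

/-- Kullback–Leibler divergence `D(P_G ‖ P_{G'})`. -/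
def isingKL {p : ℕ} (lam : ℝ) (G G' : SimpleGraph (Fin p)) : ℝ :=
  ∑ x : Fin p → Bool, isingP lam G x * Real.log (isingP lam G x / isingP lam G' x)

/-- The correlation `E_G[X_i X_j]`. -/
def isingCorr {p : ℕ} (lam : ℝ) (G : SimpleGraph (Fin p)) (i j : Fin p) : ℝ :=
  ∑ x : Fin p → Bool, isingP lam G x * (confVal (x i) * confVal (x j))

/-- Probability of an event under `P_G`. -/
def eventProb {p : ℕ} (lam : ℝ) (G : SimpleGraph (Fin p)) (S : Set (Fin p → Bool)) : ℝ :=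
  ∑ x : Fin p → Bool, if x ∈ S then isingP lam G x else 0

/-- `P_G[X_i = X_j]`. -/
def isingProbEq {p : ℕ} (lam : ℝ) (G : SimpleGraph (Fin p)) (i j : Fin p) : ℝ :=
  eventProb lam G {x | x i = x j}

/-- The edge set of `G` as a `Finset`. -/
def edgeFin {p : ℕ} (G : SimpleGraph (Fin p)) : Finset (Sym2 (Fin p)) :=
  (Set.toFinite G.edgeSet).toFinset

/-- The edit distance `|E Δ E'|` between two graphs. -/
def editDist {p : ℕ} (G G' : SimpleGraph (Fin p)) : ℕ :=
  ((edgeFin G \ edgeFin G') ∪ (edgeFin G' \ edgeFin G)).card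

set_option maxHeartbeats 1000000

lemma energy_split {p : ℕ} (G : SimpleGraph (Fin p)) (i j : Fin p) (hij : G.Adj i j)
    (x : Fin p → Bool) :
    isingEnergy G x =
      isingEnergy (G.deleteEdges {s(i, j)}) x + confVal (x i) * confVal (x j) := by
  have hne : i ≠ j := hij.ne
  set t : Fin p → Fin p → ℝ := fun a b => confVal (x a) * confVal (x b) with ht
  have key : ∀ a b : Fin p, (if G.Adj a b then t a b else 0) =
      (if (G.deleteEdges {s(i,j)}).Adj a b then t a b else 0)
      + (if a = i ∧ b = j then t a b else 0)
      + (if a = j ∧ b = i then t a b else 0) := by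
    intro a b
    by_cases h1 : a = i ∧ b = j
    · obtain ⟨rfl, rfl⟩ := h1
      simp [hij, hne, SimpleGraph.deleteEdges_adj]
    · by_cases h2 : a = j ∧ b = i
      · obtain ⟨rfl, rfl⟩ := h2
        simp [hij.symm, hne, hne.symm, Sym2.eq_swap, SimpleGraph.deleteEdges_adj, h1]
      · have hs : s(a, b) ≠ s(i, j) := by
          simp only [ne_eq, Sym2.eq_iff]; tauto
        simp [SimpleGraph.deleteEdges_adj, hs, h1, h2]
  have hA : ∀ c d : Fin p,
      (∑ a : Fin p, ∑ b : Fin p, if a = c ∧ b = d then t a b else 0) = t c d := by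
    intro c d
    rw [Finset.sum_eq_single c]
    · rw [Finset.sum_eq_single d]
      · simp
      · intro b _ hb; simp [hb]
      · simp
    · intro a _ ha
      simp [ha]
    · simp
  unfold isingEnergy
  rw [show (∑ a : Fin p, ∑ b : Fin p, if G.Adj a b then confVal (x a) * confVal (x b) else 0)
      = ∑ a : Fin p, ∑ b : Fin p, ((if (G.deleteEdges {s(i,j)}).Adj a b then t a b else 0)
      + (if a = i ∧ b = j then t a b else 0)
      + (if a = j ∧ b = i then t a b else 0)) from
    Finset.sum_congr rfl fun a _ => Finset.sum_congr rfl fun b _ => key a b]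
  simp only [Finset.sum_add_distrib, hA]
  have hsym : t i j = t j i := by simp [ht]; ring
  rw [hsym]; simp only [ht]; ring

/-- Removing a single edge `(i,j)` changes the odds of `X_i = X_j`
by exactly a factor `e^{2λ}`. -/
theorem odds_ratio_single_edge {p : ℕ} (lam : ℝ) (hlam : 0 < lam)
    (G G' : SimpleGraph (Fin p)) (i j : Fin p) (hij : G.Adj i j)
    (hG' : G' = G.deleteEdges {s(i, j)}) :
    isingProbEq lam G i j / (1 - isingProbEq lam G i j) =
      Real.exp (2 * lam) *
        (isingProbEq lam G' i j / (1 - isingProbEq lam G' i j)) := by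
  subst hG'
  have hne : i ≠ j := hij.ne
  set w' : (Fin p → Bool) → ℝ :=
    fun x => Real.exp (lam * isingEnergy (G.deleteEdges {s(i,j)}) x) with hw'
  set A : ℝ := ∑ x : Fin p → Bool, if x i = x j then w' x else 0 with hAdef
  set B : ℝ := ∑ x : Fin p → Bool, if ¬(x i = x j) then w' x else 0 with hBdef
  have hc1 : ∀ x : Fin p → Bool, x i = x j → confVal (x i) * confVal (x j) = 1 := by
    intro x h; rw [h]; cases x j <;> simp [confVal]
  have hc2 : ∀ x : Fin p → Bool, x i ≠ x j → confVal (x i) * confVal (x j) = -1 := by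
    intro x h
    cases hi : x i <;> cases hj : x j <;> simp_all [confVal]
  have hwG : ∀ x : Fin p → Bool, Real.exp (lam * isingEnergy G x) =
      if x i = x j then Real.exp lam * w' x else Real.exp (-lam) * w' x := by
    intro x
    rw [energy_split G i j hij x]
    by_cases h : x i = x j
    · rw [hc1 x h, if_pos h, hw', mul_add, Real.exp_add, mul_one, mul_comm]
    · rw [hc2 x h, if_neg h, hw', mul_add, Real.exp_add, mul_comm]
      norm_num
  have hsplit : ∀ f : (Fin p → Bool) → ℝ,
      (∑ x : Fin p → Bool, f x) = (∑ x : Fin p → Bool, if x i = x j then f x else 0)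
        + (∑ x : Fin p → Bool, if ¬(x i = x j) then f x else 0) := by
    intro f
    rw [← Finset.sum_add_distrib]
    exact Finset.sum_congr rfl fun x _ => by by_cases h : x i = x j <;> simp [h]
  have hZG : isingZ lam G = Real.exp lam * A + Real.exp (-lam) * B := by
    unfold isingZ
    rw [show (∑ x : Fin p → Bool, Real.exp (lam * isingEnergy G x))
        = ∑ x : Fin p → Bool,
          (if x i = x j then Real.exp lam * w' x else Real.exp (-lam) * w' x) from
      Finset.sum_congr rfl fun x _ => hwG x]
    rw [hsplit (fun x => if x i = x j then Real.exp lam * w' x else Real.exp (-lam) * w' x)]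
    rw [hAdef, hBdef, Finset.mul_sum, Finset.mul_sum]
    congr 1
    · exact Finset.sum_congr rfl fun x _ => by by_cases h : x i = x j <;> simp [h]
    · exact Finset.sum_congr rfl fun x _ => by by_cases h : x i = x j <;> simp [h]
  have hZG' : isingZ lam (G.deleteEdges {s(i,j)}) = A + B := by
    unfold isingZ
    exact hsplit w'
  have hNum : (∑ x : Fin p → Bool, if x i = x j then Real.exp (lam * isingEnergy G x) else 0)
      = Real.exp lam * A := by
    rw [hAdef, Finset.mul_sum]
    refine Finset.sum_congr rfl fun x _ => ?_
    by_cases h : x i = x j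
    · rw [if_pos h, if_pos h, hwG x, if_pos h]
    · simp [h]
  have hnn : ∀ x : Fin p → Bool, 0 ≤ w' x := fun x => (Real.exp_pos _).le
  have hApos : 0 < A := by
    rw [hAdef]
    refine Finset.sum_pos' (fun x _ => ?_) ⟨fun _ => true, Finset.mem_univ _, ?_⟩
    · split_ifs
      · exact hnn _
      · exact le_rfl
    · rw [if_pos rfl]
      exact Real.exp_pos _
  have hBpos : 0 < B := by
    rw [hBdef]
    refine Finset.sum_pos' (fun x _ => ?_) ⟨fun a => decide (a = i), Finset.mem_univ _, ?_⟩
    · split_ifs <;> first | exact hnn _ | exact le_rfl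
    · rw [if_pos (by simp [hne.symm])]
      exact Real.exp_pos _
  have hPG : isingProbEq lam G i j = Real.exp lam * A / isingZ lam G := by
    unfold isingProbEq eventProb isingP
    rw [← hNum, Finset.sum_div]
    refine Finset.sum_congr rfl fun x _ => ?_
    by_cases h : x i = x j
    · simp [h]
    · simp [h]
  have hPG' : isingProbEq lam (G.deleteEdges {s(i,j)}) i j = A / (A + B) := by
    unfold isingProbEq eventProb isingP
    rw [hZG']
    nth_rewrite 1 [hAdef]
    rw [Finset.sum_div]
    refine Finset.sum_congr rfl fun x _ => ?_
    by_cases h : x i = x j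
    · simp [h, hw']; rfl
    · simp [h]
  have hZ'pos : (0:ℝ) < A + B := by positivity
  have hZpos : (0:ℝ) < Real.exp lam * A + Real.exp (-lam) * B := by positivity
  rw [hPG, hPG', hZG]
  have e1 : 1 - Real.exp lam * A / (Real.exp lam * A + Real.exp (-lam) * B)
      = Real.exp (-lam) * B / (Real.exp lam * A + Real.exp (-lam) * B) := by
    field_simp
    ring
  have e2 : 1 - A / (A + B) = B / (A + B) := by
    field_simp
    ring
  rw [e1, e2]
  have cancel : ∀ u v w : ℝ, w ≠ 0 → (u / w) / (v / w) = u / v := by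
    intro u v w hw
    by_cases hv : v = 0
    · simp [hv]
    · field_simp
  rw [cancel _ _ _ hZpos.ne', cancel _ _ _ hZ'pos.ne']
  have hp : Real.exp (2*lam) * Real.exp (-lam) = Real.exp lam := by
    rw [← Real.exp_add]; ring_nf
  rw [div_eq_iff (by positivity : (0:ℝ) < Real.exp (-lam) * B).ne']
  rw [show Real.exp (2*lam) * (A / B) * (Real.exp (-lam) * B)
      = (Real.exp (2*lam) * Real.exp (-lam)) * (A / B * B) by ring,
    hp, div_mul_cancel₀ _ hBpos.ne']

end
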